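/- Let X be a compact metric space with diam(X) < π/2, p > 1, and let μ, ν be Borel probability measures on Susp(X). Then W_p(μ,ν) = π if and only if {μ,ν} = {δ_𝟎, δ_𝛑}. -/

import Mathlib

open MeasureTheory

/-- An abstract presentation of the spherical suspension of a metric space `X`:
a metric space `S` together with a surjective parametrisation `pt : X → [0,π] → S`
realising the spherical suspension distance. (This characterises `Susp(X)` up to
isometry; in particular `pt x 0` and `pt x π` are the two vertices `𝟎` and `𝛑`.) -/
structure SuspensionOf (X : Type*) [MetricSpace X] (S : Type*) [MetricSpace S] where
  pt : X → ℝ → S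
  surj : ∀ z : S, ∃ x : X, ∃ t ∈ Set.Icc (0 : ℝ) Real.pi, pt x t = z
  dist_eq : ∀ (x y : X) (t s : ℝ), t ∈ Set.Icc (0 : ℝ) Real.pi →
    s ∈ Set.Icc (0 : ℝ) Real.pi →
    dist (pt x t) (pt y s) =
      Real.arccos (Real.cos t * Real.cos s +
        Real.sin t * Real.sin s * Real.cos (dist x y))

/-- The `p`-Wasserstein distance associated to a cost (distance) function `d`. -/
noncomputable def Wp {Z : Type*} [MeasurableSpace Z] (d : Z → Z → ℝ) (p : ℝ)
    (μ ν : Measure Z) : ℝ :=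
  sInf {c : ℝ | ∃ γ : Measure (Z × Z), IsProbabilityMeasure γ ∧
    γ.map Prod.fst = μ ∧ γ.map Prod.snd = ν ∧
    c = (∫ z, d z.1 z.2 ^ p ∂γ) ^ (1 / p)}

lemma aux_eq_dirac_of_singleton {S : Type*} [MeasurableSpace S] [MeasurableSingletonClass S]
    (μ : Measure S) [IsProbabilityMeasure μ] (a : S) (h : μ {a} = 1) :
    μ = Measure.dirac a := by
  ext s hs
  rw [Measure.dirac_apply' a hs]
  by_cases hmem : a ∈ s
  · have h1 : μ s = 1 :=
      le_antisymm prob_le_one (h ▸ measure_mono (Set.singleton_subset_iff.mpr hmem))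
    simp [h1, hmem]
  · have hc : μ ({a}ᶜ) = 0 := by
      rw [measure_compl (measurableSet_singleton a) (measure_ne_top _ _), h, measure_univ]
      simp
    have h0 : μ s = 0 := measure_mono_null (fun x hx => by
      simp only [Set.mem_compl_iff, Set.mem_singleton_iff]
      rintro rfl; exact hmem hx) hc
    simp [h0, hmem]

lemma aux_abcd {a b c d : ℝ} (ha0 : 0 ≤ a) (hb0 : 0 ≤ b) (hc0 : 0 ≤ c) (hd0 : 0 ≤ d)
    (hac : a + c ≤ 1) (hbd : b + d ≤ 1) (h : a * b + c * d = 1) :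
    (a = 1 ∧ b = 1) ∨ (c = 1 ∧ d = 1) := by
  have hb1 : b ≤ 1 := by linarith
  have hd1 : d ≤ 1 := by linarith
  have h1 : a + c = 1 := by nlinarith
  have h2 : a * (1 - b) = 0 := by nlinarith
  have h3 : c * (1 - d) = 0 := by nlinarith
  rcases mul_eq_zero.mp h2 with h4 | h4
  · right
    have hc1 : c = 1 := by linarith
    constructor
    · exact hc1
    · rcases mul_eq_zero.mp h3 with h5 | h5 <;> [linarith; linarith]
  · left
    have hb : b = 1 := by linarith
    have hd : d = 0 := by linarith
    have hc : c = 0 := by rcases mul_eq_zero.mp h3 with h5 | h5 <;> linarith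
    exact ⟨by linarith, hb⟩

lemma aux_rpow_inv {x p : ℝ} (hx : 0 ≤ x) (hp : p ≠ 0) : (x ^ p) ^ (1 / p) = x := by
  rw [← Real.rpow_mul hx, mul_one_div_cancel hp, Real.rpow_one]

lemma aux_wp_dirac {S : Type*} [MetricSpace S] [SecondCountableTopology S] [MeasurableSpace S]
    [BorelSpace S] {p : ℝ} (hp : 0 < p) (a b : S) :
    Wp (fun x y : S => dist x y) p (Measure.dirac a) (Measure.dirac b) = dist a b := by
  have hp0 : p ≠ 0 := ne_of_gt hp
  have hcont : Continuous (fun z : S × S => dist z.1 z.2 ^ p) :=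
    continuous_dist.rpow_const (fun z => Or.inr hp.le)
  have hset : {c : ℝ | ∃ γ : Measure (S × S), IsProbabilityMeasure γ ∧
      γ.map Prod.fst = Measure.dirac a ∧ γ.map Prod.snd = Measure.dirac b ∧
      c = (∫ z, dist z.1 z.2 ^ p ∂γ) ^ (1 / p)} = {dist a b} := by
    ext c
    simp only [Set.mem_setOf_eq, Set.mem_singleton_iff]
    constructor
    · rintro ⟨γ, hγ, hfst, hsnd, rfl⟩
      have h1 : ∀ᵐ z : S × S ∂γ, z.1 = a := by
        rw [ae_iff]
        have : {z : S × S | ¬ z.1 = a} = Prod.fst ⁻¹' ({a}ᶜ) := rfl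
        rw [this, ← Measure.map_apply measurable_fst (measurableSet_singleton a).compl, hfst,
          Measure.dirac_apply' _ (measurableSet_singleton a).compl]
        simp
      have h2 : ∀ᵐ z : S × S ∂γ, z.2 = b := by
        rw [ae_iff]
        have : {z : S × S | ¬ z.2 = b} = Prod.snd ⁻¹' ({b}ᶜ) := rfl
        rw [this, ← Measure.map_apply measurable_snd (measurableSet_singleton b).compl, hsnd,
          Measure.dirac_apply' _ (measurableSet_singleton b).compl]
        simp
      have heq : (fun z : S × S => dist z.1 z.2 ^ p) =ᵐ[γ] fun _ => dist a b ^ p :=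
        (h1.and h2).mono fun z hz => by simp only [hz.1, hz.2]
      rw [integral_congr_ae heq, integral_const, probReal_univ, one_smul,
        aux_rpow_inv dist_nonneg hp0]
    · rintro rfl
      refine ⟨Measure.dirac (a, b), Measure.dirac.isProbabilityMeasure, ?_, ?_, ?_⟩
      · rw [Measure.map_dirac' measurable_fst]
      · rw [Measure.map_dirac' measurable_snd]
      · rw [integral_dirac' _ _ hcont.stronglyMeasurable, aux_rpow_inv dist_nonneg hp0]
  rw [Wp, hset, csInf_singleton]

/-- For a compact metric space `X` with `diam(X) < π/2` and `p > 1`, two probability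
measures `μ, ν` on `Susp(X)` satisfy `W_p(μ,ν) = π` iff `{μ,ν} = {δ_𝟎, δ_𝛑}`. -/
theorem stmt_9 {X S : Type*} [MetricSpace X] [CompactSpace X] [Nonempty X]
    [MetricSpace S] [MeasurableSpace S] [BorelSpace S]
    (hdiam : ∀ a b : X, dist a b < Real.pi / 2)
    (p : ℝ) (hp : 1 < p) (susp : SuspensionOf X S)
    (μ ν : Measure S) [IsProbabilityMeasure μ] [IsProbabilityMeasure ν] :
    Wp (fun a b : S => dist a b) p μ ν = Real.pi ↔
      (μ = Measure.dirac (susp.pt (Classical.arbitrary X) 0) ∧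
        ν = Measure.dirac (susp.pt (Classical.arbitrary X) Real.pi)) ∨
      (μ = Measure.dirac (susp.pt (Classical.arbitrary X) Real.pi) ∧
        ν = Measure.dirac (susp.pt (Classical.arbitrary X) 0)) := by
  classical
  have hp0 : (0:ℝ) < p := lt_trans one_pos hp
  have hpne : p ≠ 0 := ne_of_gt hp0
  set x₀ := Classical.arbitrary X with hx₀
  have h0I : (0:ℝ) ∈ Set.Icc (0:ℝ) Real.pi := ⟨le_refl 0, Real.pi_pos.le⟩
  have hπI : Real.pi ∈ Set.Icc (0:ℝ) Real.pi := ⟨Real.pi_pos.le, le_refl _⟩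
  set a0 := susp.pt x₀ 0 with ha0
  set aπ := susp.pt x₀ Real.pi with haπ
  -- the two vertices
  have hpt0 : ∀ x : X, susp.pt x 0 = a0 := by
    intro x
    have h := susp.dist_eq x x₀ 0 0 h0I h0I
    rw [Real.cos_zero, Real.sin_zero] at h
    norm_num [Real.arccos_one] at h
    exact h
  have hptπ : ∀ x : X, susp.pt x Real.pi = aπ := by
    intro x
    have h := susp.dist_eq x x₀ Real.pi Real.pi hπI hπI
    rw [Real.cos_pi, Real.sin_pi] at h
    norm_num [Real.arccos_one] at h
    exact h
  have hπdist : dist a0 aπ = Real.pi := by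
    have h := susp.dist_eq x₀ x₀ 0 Real.pi h0I hπI
    rw [Real.cos_zero, Real.sin_zero, Real.cos_pi] at h
    norm_num [Real.arccos_neg_one] at h
    exact h
  have hne0π : a0 ≠ aπ := by
    intro h
    rw [h, dist_self] at hπdist
    exact Real.pi_ne_zero hπdist.symm
  have hdist_le : ∀ z w : S, dist z w ≤ Real.pi := by
    intro z w
    obtain ⟨x, t, ht, rfl⟩ := susp.surj z
    obtain ⟨y, s, hs, rfl⟩ := susp.surj w
    rw [susp.dist_eq x y t s ht hs]
    exact Real.arccos_le_pi _
  -- characterisation of distance π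
  have hchar : ∀ z w : S, dist z w = Real.pi → (z = a0 ∧ w = aπ) ∨ (z = aπ ∧ w = a0) := by
    intro z w h
    obtain ⟨x, t, ht, rfl⟩ := susp.surj z
    obtain ⟨y, s, hs, rfl⟩ := susp.surj w
    rw [susp.dist_eq x y t s ht hs, Real.arccos_eq_pi] at h
    have hsin_t : 0 ≤ Real.sin t := Real.sin_nonneg_of_nonneg_of_le_pi ht.1 ht.2
    have hsin_s : 0 ≤ Real.sin s := Real.sin_nonneg_of_nonneg_of_le_pi hs.1 hs.2
    have hcosd : 0 < Real.cos (dist x y) := by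
      have h0d : (0:ℝ) ≤ dist x y := dist_nonneg
      have hpp := Real.pi_pos
      exact Real.cos_pos_of_mem_Ioo ⟨by linarith, hdiam x y⟩
    have h3 : 0 ≤ Real.sin t * Real.sin s * Real.cos (dist x y) :=
      mul_nonneg (mul_nonneg hsin_t hsin_s) hcosd.le
    have hcc : Real.cos t * Real.cos s ≤ -1 := by linarith
    have hkey : (Real.cos t = 1 ∧ Real.cos s = -1) ∨ (Real.cos t = -1 ∧ Real.cos s = 1) := by
      rcases le_or_gt (Real.cos t) 0 with h4 | h4
      · right
        have h5 : Real.cos t = -1 := le_antisymm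
          (by nlinarith [Real.cos_le_one s, Real.neg_one_le_cos s]) (Real.neg_one_le_cos t)
        have h6 : Real.cos s = 1 := le_antisymm (Real.cos_le_one s) (by nlinarith)
        exact ⟨h5, h6⟩
      · left
        have h6 : Real.cos s = -1 := le_antisymm
          (by nlinarith [Real.cos_le_one t]) (Real.neg_one_le_cos s)
        have h5 : Real.cos t = 1 := le_antisymm (Real.cos_le_one t) (by nlinarith)
        exact ⟨h5, h6⟩
    have harct := Real.arccos_cos ht.1 ht.2
    have harcs := Real.arccos_cos hs.1 hs.2
    rcases hkey with ⟨h5, h6⟩ | ⟨h5, h6⟩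
    · left
      rw [h5, Real.arccos_one] at harct
      rw [h6, Real.arccos_neg_one] at harcs
      rw [← harct, ← harcs]
      exact ⟨hpt0 x, hptπ y⟩
    · right
      rw [h5, Real.arccos_neg_one] at harct
      rw [h6, Real.arccos_one] at harcs
      rw [← harct, ← harcs]
      exact ⟨hptπ x, hpt0 y⟩
  -- compactness and second countability of S
  have hg : Continuous (fun q : X × (Set.Icc (0:ℝ) Real.pi) => susp.pt q.1 q.2) := by
    rw [continuous_iff_continuousAt]
    rintro ⟨x, t, htI⟩
    rw [ContinuousAt, tendsto_iff_dist_tendsto_zero]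
    have hh : Continuous (fun q : X × (Set.Icc (0:ℝ) Real.pi) =>
        Real.arccos (Real.cos (q.2 : ℝ) * Real.cos t +
          Real.sin (q.2 : ℝ) * Real.sin t * Real.cos (dist q.1 x))) := by
      apply Real.continuous_arccos.comp
      have hc2 : Continuous (fun q : X × (Set.Icc (0:ℝ) Real.pi) => (q.2 : ℝ)) :=
        continuous_subtype_val.comp continuous_snd
      have hc1 : Continuous (fun q : X × (Set.Icc (0:ℝ) Real.pi) => dist q.1 x) :=
        continuous_fst.dist continuous_const
      exact ((Real.continuous_cos.comp hc2).mul continuous_const).add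
        (((Real.continuous_sin.comp hc2).mul continuous_const).mul
          (Real.continuous_cos.comp hc1))
    have hval : Real.arccos (Real.cos t * Real.cos t +
        Real.sin t * Real.sin t * Real.cos (dist x x)) = 0 := by
      rw [dist_self, Real.cos_zero]
      have h1 : Real.cos t * Real.cos t + Real.sin t * Real.sin t * 1 = 1 := by
        nlinarith [Real.sin_sq_add_cos_sq t]
      rw [h1, Real.arccos_one]
    have htend := hh.continuousAt (x := (⟨x, ⟨t, htI⟩⟩ : X × (Set.Icc (0:ℝ) Real.pi))).tendsto
    rw [hval] at htend
    refine Filter.Tendsto.congr (fun q => ?_) htend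
    exact (susp.dist_eq q.1 x q.2 t q.2.2 htI).symm
  haveI : CompactSpace S := by
    constructor
    have hrange : Set.univ =
        Set.range (fun q : X × (Set.Icc (0:ℝ) Real.pi) => susp.pt q.1 q.2) := by
      ext z
      simp only [Set.mem_univ, true_iff, Set.mem_range]
      obtain ⟨x, t, ht, hz⟩ := susp.surj z
      exact ⟨(x, ⟨t, ht⟩), hz⟩
    rw [hrange]
    exact isCompact_range hg
  haveI : SecondCountableTopology S := inferInstance
  constructor
  · -- forward direction
    intro hW
    set f : S × S → ℝ := fun z => dist z.1 z.2 ^ p with hf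
    have hfc : Continuous f := continuous_dist.rpow_const fun _ => Or.inr hp0.le
    have hfnonneg : ∀ z, 0 ≤ f z := fun z => Real.rpow_nonneg dist_nonneg p
    have hfle : ∀ z : S × S, f z ≤ Real.pi ^ p := fun z =>
      Real.rpow_le_rpow dist_nonneg (hdist_le z.1 z.2) hp0.le
    have hint : Integrable f (μ.prod ν) := by
      refine Integrable.mono' (integrable_const (Real.pi ^ p)) hfc.aestronglyMeasurable ?_
      exact ae_of_all _ fun z => by
        rw [Real.norm_eq_abs, abs_of_nonneg (hfnonneg z)]; exact hfle z
    have hintle : ∫ z, f z ∂(μ.prod ν) ≤ Real.pi ^ p := by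
      calc ∫ z, f z ∂(μ.prod ν) ≤ ∫ _, Real.pi ^ p ∂(μ.prod ν) :=
            integral_mono hint (integrable_const _) hfle
        _ = Real.pi ^ p := by simp
    have hintnonneg : 0 ≤ ∫ z, f z ∂(μ.prod ν) := integral_nonneg hfnonneg
    rw [Wp] at hW
    have hble : BddBelow {c : ℝ | ∃ γ : Measure (S × S), IsProbabilityMeasure γ ∧
        γ.map Prod.fst = μ ∧ γ.map Prod.snd = ν ∧
        c = (∫ z, dist z.1 z.2 ^ p ∂γ) ^ (1 / p)} := by
      refine ⟨0, fun c hc => ?_⟩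
      obtain ⟨γ, _, _, _, rfl⟩ := hc
      exact Real.rpow_nonneg (integral_nonneg fun z => Real.rpow_nonneg dist_nonneg p) _
    have hmem : (∫ z, f z ∂(μ.prod ν)) ^ (1/p) ∈ {c : ℝ | ∃ γ : Measure (S × S),
        IsProbabilityMeasure γ ∧ γ.map Prod.fst = μ ∧ γ.map Prod.snd = ν ∧
        c = (∫ z, dist z.1 z.2 ^ p ∂γ) ^ (1 / p)} :=
      ⟨μ.prod ν, inferInstance, by simp, by simp, rfl⟩
    have h1 : Real.pi ≤ (∫ z, f z ∂(μ.prod ν)) ^ (1/p) := hW ▸ csInf_le hble hmem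
    have h2 : (∫ z, f z ∂(μ.prod ν)) ^ (1/p) ≤ Real.pi := by
      calc (∫ z, f z ∂(μ.prod ν)) ^ (1/p) ≤ (Real.pi ^ p) ^ (1/p) :=
            Real.rpow_le_rpow hintnonneg hintle (by positivity)
        _ = Real.pi := aux_rpow_inv Real.pi_pos.le hpne
    have hI : ∫ z, f z ∂(μ.prod ν) = Real.pi ^ p := by
      have hc := congrArg (fun x : ℝ => x ^ p) (le_antisymm h2 h1)
      rwa [← Real.rpow_mul hintnonneg, one_div, inv_mul_cancel₀ hpne, Real.rpow_one] at hc
    have hae : ∀ᵐ z ∂(μ.prod ν), dist z.1 z.2 = Real.pi := by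
      have hsub : Integrable (fun z => Real.pi ^ p - f z) (μ.prod ν) :=
        (integrable_const _).sub hint
      have hz0 : ∫ z, (Real.pi ^ p - f z) ∂(μ.prod ν) = 0 := by
        rw [integral_sub (integrable_const _) hint, hI]
        simp
      have h0 := (integral_eq_zero_iff_of_nonneg
        (fun z => sub_nonneg.mpr (hfle z)) hsub).mp hz0
      refine h0.mono fun z hz => ?_
      have hfz : f z = Real.pi ^ p := by
        have : Real.pi ^ p - f z = 0 := hz
        linarith
      by_contra hneq
      have hlt : dist z.1 z.2 < Real.pi := lt_of_le_of_ne (hdist_le _ _) hneq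
      have := Real.rpow_lt_rpow dist_nonneg hlt hp0
      rw [show dist z.1 z.2 ^ p = f z from rfl, hfz] at this
      exact lt_irrefl _ this
    set B : Set (S × S) := ({a0} ×ˢ {aπ}) ∪ ({aπ} ×ˢ {a0}) with hB
    have hBmeas : MeasurableSet B :=
      ((measurableSet_singleton a0).prod (measurableSet_singleton aπ)).union
        ((measurableSet_singleton aπ).prod (measurableSet_singleton a0))
    have haeB : ∀ᵐ z ∂(μ.prod ν), z ∈ B := by
      refine hae.mono fun z hz => ?_
      simp only [hB, Set.mem_union, Set.mem_prod, Set.mem_singleton_iff]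
      exact hchar z.1 z.2 hz
    have hB1 : (μ.prod ν) B = 1 := by
      have hcompl : (μ.prod ν) Bᶜ = 0 := ae_iff.mp haeB
      exact (prob_compl_eq_zero_iff hBmeas).mp hcompl
    have hdisjB : Disjoint (({a0} : Set S) ×ˢ ({aπ} : Set S)) (({aπ} : Set S) ×ˢ ({a0} : Set S)) := by
      rw [Set.disjoint_left]
      rintro z hz1 hz2
      simp only [Set.mem_prod, Set.mem_singleton_iff] at hz1 hz2
      exact hne0π (hz1.1 ▸ hz2.1)
    have hsum : μ {a0} * ν {aπ} + μ {aπ} * ν {a0} = 1 := by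
      rw [← hB1, hB, measure_union hdisjB
        ((measurableSet_singleton aπ).prod (measurableSet_singleton a0)),
        Measure.prod_prod, Measure.prod_prod]
    have htoReal : (μ {a0}).toReal * (ν {aπ}).toReal + (μ {aπ}).toReal * (ν {a0}).toReal = 1 := by
      have hc := congrArg ENNReal.toReal hsum
      rwa [ENNReal.toReal_add (ENNReal.mul_ne_top (measure_ne_top _ _) (measure_ne_top _ _))
        (ENNReal.mul_ne_top (measure_ne_top _ _) (measure_ne_top _ _)),
        ENNReal.toReal_mul, ENNReal.toReal_mul, ENNReal.toReal_one] at hc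
    have hμsum : (μ {a0}).toReal + (μ {aπ}).toReal ≤ 1 := by
      have hd : Disjoint ({a0} : Set S) {aπ} := Set.disjoint_singleton.mpr hne0π
      have hu := measure_union (μ := μ) hd (measurableSet_singleton aπ)
      have h2' : (μ ({a0} ∪ {aπ})).toReal ≤ 1 := by
        simpa using ENNReal.toReal_mono ENNReal.one_ne_top prob_le_one
      rwa [hu, ENNReal.toReal_add (measure_ne_top μ _) (measure_ne_top μ _)] at h2'
    have hνsum : (ν {aπ}).toReal + (ν {a0}).toReal ≤ 1 := by
      have hd : Disjoint ({aπ} : Set S) {a0} := Set.disjoint_singleton.mpr hne0π.symm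
      have hu := measure_union (μ := ν) hd (measurableSet_singleton a0)
      have h2' : (ν ({aπ} ∪ {a0})).toReal ≤ 1 := by
        simpa using ENNReal.toReal_mono ENNReal.one_ne_top prob_le_one
      rwa [hu, ENNReal.toReal_add (measure_ne_top ν _) (measure_ne_top ν _)] at h2'
    rcases aux_abcd ENNReal.toReal_nonneg ENNReal.toReal_nonneg ENNReal.toReal_nonneg
        ENNReal.toReal_nonneg hμsum hνsum htoReal with ⟨hA, hB'⟩ | ⟨hC, hD⟩
    · exact Or.inl ⟨aux_eq_dirac_of_singleton μ a0 ((ENNReal.toReal_eq_one_iff _).mp hA),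
        aux_eq_dirac_of_singleton ν aπ ((ENNReal.toReal_eq_one_iff _).mp hB')⟩
    · exact Or.inr ⟨aux_eq_dirac_of_singleton μ aπ ((ENNReal.toReal_eq_one_iff _).mp hC),
        aux_eq_dirac_of_singleton ν a0 ((ENNReal.toReal_eq_one_iff _).mp hD)⟩
  · -- backward direction
    rintro (⟨rfl, rfl⟩ | ⟨rfl, rfl⟩)
    · rw [aux_wp_dirac hp0 a0 aπ]
      exact hπdist
    · rw [aux_wp_dirac hp0 aπ a0]
      rw [dist_comm]
      exact hπdist
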